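/- Let d, k ≥ 1 and s ≥ k be integers, and let X_1, ..., X_s be i.i.d. random vectors uniformly distributed on [0,1]^d. Let P_1 = 1{X_1 is a k-PNN of the origin among X_1,...,X_s}. Then, almost surely, E[P_1 | X_1] = F_{s−1, p}(2k−2) evaluated at p = ∏_{j=1}^d X_{1j}, where F_{m,p}(r) = P(Binomial(m,p) ≤ r) denotes the Binomial(m,p) cumulative distribution function at r. -/

import Mathlib

open MeasureTheory ProbabilityTheory Finset
open scoped Classical ENNReal

/-- `p` lies in the axis-aligned closed hyperrectangle with vertices `a` and `b`. -/
def inRect {d : ℕ} (a b p : Fin d → ℝ) : Prop :=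
  ∀ j, min (a j) (b j) ≤ p j ∧ p j ≤ max (a j) (b j)

/-- `Λ` is a PNN `k`-set of `x`: a set of between `k` and `2k−1` sample points for which
some axis-aligned hyperrectangle contains `x` and `Λ` and no other sample point. -/
def isPNNkSet {d s : ℕ} (k : ℕ) (x : Fin d → ℝ) (X : Fin s → Fin d → ℝ)
    (Λ : Finset (Fin s)) : Prop :=
  k ≤ Λ.card ∧ Λ.card ≤ 2 * k - 1 ∧
    ∃ a b : Fin d → ℝ, inRect a b x ∧ (∀ i ∈ Λ, inRect a b (X i)) ∧
      ∀ i ∉ Λ, ¬ inRect a b (X i)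

/-- `X i` is a `k`-PNN of `x`: some PNN `k`-set of `x` contains `X i`. -/
def isKPNN {d s : ℕ} (k : ℕ) (x : Fin d → ℝ) (X : Fin s → Fin d → ℝ) (i : Fin s) : Prop :=
  ∃ Λ : Finset (Fin s), isPNNkSet k x X Λ ∧ i ∈ Λ

/-- The `Binomial(m, p)` cumulative distribution function evaluated at `r`. -/
noncomputable def binomCDF (m : ℕ) (p : ℝ) (r : ℕ) : ℝ :=
  ∑ j ∈ Finset.range (r + 1), (m.choose j : ℝ) * p ^ j * (1 - p) ^ (m - j)

/-! ### Auxiliary deterministic lemmas -/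

lemma exists_threshold {s k : ℕ} (v : Fin s → ℝ) (hv0 : ∀ i, 0 ≤ v i)
    (hdist : ∀ i i', i ≠ i' → 0 < v i → 0 < v i' → v i ≠ v i')
    (hks : k ≤ s) (hS : (univ.filter (fun i => v i ≤ 0)).card < k) :
    ∃ t : ℝ, 0 ≤ t ∧ (univ.filter (fun i => v i ≤ t)).card = k := by
  have hk1 : 1 ≤ k := Nat.one_le_iff_ne_zero.mpr (by rintro rfl; omega)
  have hs0 : 0 < s := lt_of_lt_of_le hk1 hks
  haveI : Nonempty (Fin s) := ⟨⟨0, hs0⟩⟩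
  obtain ⟨imax, -, hmax⟩ := Finset.exists_max_image (univ : Finset (Fin s)) v univ_nonempty
  set F := univ.filter fun i : Fin s => k ≤ (univ.filter fun i' => v i' ≤ v i).card with hF
  have hFne : F.Nonempty := by
    refine ⟨imax, mem_filter.mpr ⟨mem_univ _, ?_⟩⟩
    have : (univ.filter fun i' => v i' ≤ v imax) = univ :=
      filter_true_of_mem fun i _ => hmax i (mem_univ i)
    rw [this, card_univ, Fintype.card_fin]; exact hks
  obtain ⟨istar, hiF, hmin⟩ := F.exists_min_image v hFne
  have hge : k ≤ (univ.filter fun i' => v i' ≤ v istar).card := (mem_filter.mp hiF).2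
  refine ⟨v istar, hv0 _, ?_⟩
  by_contra hne
  set W := univ.filter fun i' => v i' ≤ v istar with hW
  have hgt : k < W.card := lt_of_le_of_ne hge (Ne.symm hne)
  have histar_pos : 0 < v istar := by
    rcases lt_or_ge 0 (v istar) with h | h
    · exact h
    · exfalso
      have : W ⊆ univ.filter fun i => v i ≤ 0 := fun w hw => by
        simp only [hW, mem_filter] at hw ⊢
        exact ⟨hw.1, le_trans hw.2 h⟩
      have := card_le_card this
      omega
  have histarW : istar ∈ W := mem_filter.mpr ⟨mem_univ _, le_refl _⟩
  set D := (W.erase istar).filter fun i => 0 < v i with hD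
  have hDne : D.Nonempty := by
    rw [Finset.nonempty_iff_ne_empty]
    intro hemp
    have hsub : W.erase istar ⊆ univ.filter fun i => v i ≤ 0 := by
      intro w hw
      simp only [mem_filter, mem_univ, true_and]
      by_contra hpos
      have : w ∈ D := mem_filter.mpr ⟨hw, lt_of_not_ge hpos⟩
      rw [hemp] at this; exact absurd this (notMem_empty w)
    have h1 := card_le_card hsub
    have h2 : (W.erase istar).card = W.card - 1 := card_erase_of_mem histarW
    omega
  obtain ⟨i', hi'D, hmax'⟩ := D.exists_max_image v hDne
  have hi'W : i' ∈ W.erase istar := (mem_filter.mp hi'D).1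
  have hi'pos : 0 < v i' := (mem_filter.mp hi'D).2
  have hi'ne : i' ≠ istar := (mem_erase.mp hi'W).1
  have hi'le : v i' ≤ v istar := (mem_filter.mp (mem_erase.mp hi'W).2).2
  have hi'lt : v i' < v istar :=
    lt_of_le_of_ne hi'le (hdist i' istar hi'ne hi'pos histar_pos)
  have hsub : W.erase istar ⊆ univ.filter fun i => v i ≤ v i' := by
    intro w hw
    simp only [mem_filter, mem_univ, true_and]
    rcases lt_or_ge 0 (v w) with h | h
    · exact hmax' w (mem_filter.mpr ⟨hw, h⟩)
    · exact le_trans h (le_of_lt hi'pos)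
  have hcard : k ≤ (univ.filter fun i => v i ≤ v i').card := by
    have h1 := card_le_card hsub
    have h2 : (W.erase istar).card = W.card - 1 := card_erase_of_mem histarW
    omega
  have : i' ∈ F := mem_filter.mpr ⟨mem_univ _, hcard⟩
  exact absurd (hmin i' this) (not_le_of_gt hi'lt)

lemma kpnn_char {d s : ℕ} (k : ℕ) (hd : 1 ≤ d) (hk : 1 ≤ k) (hks : k ≤ s) (i0 : Fin s)
    (y : Fin s → Fin d → ℝ)
    (hy : ∀ i j, 0 ≤ y i j ∧ y i j ≤ 1)
    (hdist : ∀ i i' j j', i ≠ i' → y i j ≠ y i' j') :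
    isKPNN k 0 y i0 ↔
      (univ.filter fun i => ¬ i = i0 ∧ y i ∈ Set.Icc 0 (y i0)).card ≤ 2 * k - 2 := by
  have hmemIcc : ∀ i, y i ∈ Set.Icc (0 : Fin d → ℝ) (y i0) ↔ ∀ j, y i j ≤ y i0 j := by
    intro i
    constructor
    · rintro ⟨-, h2⟩ j; exact h2 j
    · intro h; exact ⟨fun j => (hy i j).1, fun j => h j⟩
  constructor
  · -- forward
    rintro ⟨Λ, ⟨hk1, hk2, a, b, h0, hin, hout⟩, hi0Λ⟩
    set C := univ.filter fun i => ¬ i = i0 ∧ y i ∈ Set.Icc 0 (y i0) with hC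
    have hsub : C ⊆ Λ.erase i0 := by
      intro i hi
      simp only [hC, mem_filter, mem_univ, true_and] at hi
      obtain ⟨hne, hmem⟩ := hi
      rw [hmemIcc] at hmem
      have hrect : inRect a b (y i) := fun j =>
        ⟨le_trans (h0 j).1 (hy i j).1, le_trans (hmem j) (hin i0 hi0Λ j).2⟩
      rw [mem_erase]
      refine ⟨hne, ?_⟩
      by_contra hnot
      exact hout i hnot hrect
    have h1 := card_le_card hsub
    have h2 : (Λ.erase i0).card = Λ.card - 1 := card_erase_of_mem hi0Λ
    omega
  · -- backward
    intro hCcard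
    set C := univ.filter fun i => ¬ i = i0 ∧ y i ∈ Set.Icc 0 (y i0) with hC
    set S := univ.filter fun i => y i ∈ Set.Icc (0 : Fin d → ℝ) (y i0) with hS
    have hi0S : i0 ∈ S := by
      simp only [hS, mem_filter, mem_univ, true_and]
      exact ⟨fun j => (hy i0 j).1, fun j => le_refl _⟩
    have hCS : C = S.erase i0 := by
      ext i
      simp only [hC, hS, mem_filter, mem_erase, mem_univ, true_and]
    have hScard : S.card = C.card + 1 := by
      rw [hCS, card_erase_of_mem hi0S]
      have : 1 ≤ S.card := card_pos.mpr ⟨i0, hi0S⟩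
      omega
    rcases le_or_gt k S.card with hkS | hkS
    · -- S itself works
      have hS2 : S.card ≤ 2 * k - 1 := by omega
      refine ⟨S, ⟨hkS, hS2, (fun _ => 0), y i0, ?_, ?_, ?_⟩, hi0S⟩
      · intro j
        exact ⟨min_le_left _ _, le_max_left 0 _⟩
      · intro i hi j
        simp only [hS, mem_filter, mem_univ, true_and] at hi
        rw [hmemIcc] at hi
        exact ⟨le_trans (min_le_left _ _) (hy i j).1, le_trans (hi j) (le_max_right 0 _)⟩
      · intro i hi hrect
        apply hi
        simp only [hS, mem_filter, mem_univ, true_and]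
        rw [hmemIcc]
        intro j
        have := (hrect j).2
        rwa [max_eq_right (hy i0 j).1] at this
    · -- threshold construction
      haveI : Nonempty (Fin d) := ⟨⟨0, hd⟩⟩
      have hune : (univ : Finset (Fin d)).Nonempty := univ_nonempty
      set v : Fin s → ℝ := fun i =>
        univ.sup' hune (fun j => if y i j ≤ y i0 j then 0 else y i j) with hv
      have hv0 : ∀ i, 0 ≤ v i := by
        intro i
        refine le_trans ?_ (Finset.le_sup' _ (mem_univ ⟨0, hd⟩))
        split <;> [exact le_refl 0; exact (hy i _).1]
      have hkey : ∀ i t, 0 ≤ t → (v i ≤ t ↔ ∀ j, y i j ≤ max (y i0 j) t) := by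
        intro i t ht
        rw [hv, Finset.sup'_le_iff]
        constructor
        · intro h j
          have := h j (mem_univ j)
          split at this
          · exact le_max_of_le_left (by assumption)
          · exact le_max_of_le_right this
        · intro h j _
          split
          · exact ht
          · rcases le_max_iff.mp (h j) with h' | h'
            · exact absurd h' (by assumption)
            · exact h'
      have hvzero : ∀ i, v i ≤ 0 ↔ i ∈ S := by
        intro i
        rw [hkey i 0 (le_refl 0)]
        simp only [hS, mem_filter, mem_univ, true_and]
        rw [hmemIcc]
        constructor
        · intro h j
          have := h j
          rwa [max_eq_left (hy i0 j).1] at this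
        · intro h j
          rw [max_eq_left (hy i0 j).1]; exact h j
      have hfilt : (univ.filter fun i => v i ≤ 0) = S := by
        ext i; simp only [mem_filter, mem_univ, true_and]; rw [hvzero]
      have hvdist : ∀ i i', i ≠ i' → 0 < v i → 0 < v i' → v i ≠ v i' := by
        intro i i' hne hpos hpos'
        obtain ⟨j, -, hj⟩ := Finset.exists_mem_eq_sup' hune
          (fun j => if y i j ≤ y i0 j then 0 else y i j)
        obtain ⟨j', -, hj'⟩ := Finset.exists_mem_eq_sup' hune
          (fun j => if y i' j ≤ y i0 j then 0 else y i' j)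
        have h1 : v i = if y i j ≤ y i0 j then 0 else y i j := hj
        have h2 : v i' = if y i' j' ≤ y i0 j' then 0 else y i' j' := hj'
        by_cases hb1 : y i j ≤ y i0 j
        · rw [h1, if_pos hb1] at hpos; exact absurd hpos (lt_irrefl 0)
        · by_cases hb2 : y i' j' ≤ y i0 j'
          · rw [h2, if_pos hb2] at hpos'; exact absurd hpos' (lt_irrefl 0)
          · rw [h1, if_neg hb1, h2, if_neg hb2]; exact hdist i i' j j' hne
      obtain ⟨t, ht0, htcard⟩ := exists_threshold v hv0 hvdist hks (by rw [hfilt]; exact hkS)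
      set Λ := univ.filter fun i => v i ≤ t with hΛ
      have hΛ2 : Λ.card ≤ 2 * k - 1 := by omega
      refine ⟨Λ, ⟨le_of_eq htcard.symm, hΛ2, (fun _ => -t), (fun j => max (y i0 j) t),
        ?_, ?_, ?_⟩, ?_⟩
      · intro j
        refine ⟨le_trans (min_le_left _ _) ?_, le_trans (le_trans (hy i0 j).1
          (le_max_left _ t)) (le_max_right _ _)⟩
        show -t ≤ (0 : ℝ)
        linarith
      · intro i hi j
        simp only [hΛ, mem_filter, mem_univ, true_and] at hi
        refine ⟨le_trans (min_le_left _ _) ?_,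
          le_trans ((hkey i t ht0).mp hi j) (le_max_right _ _)⟩
        show -t ≤ y i j
        have := (hy i j).1
        linarith
      · intro i hi hrect
        apply hi
        simp only [hΛ, mem_filter, mem_univ, true_and]
        rw [hkey i t ht0]
        intro j
        have := (hrect j).2
        have hmx : max (-t) (max (y i0 j) t) = max (y i0 j) t := by
          apply max_eq_right
          linarith [le_max_right (y i0 j) t]
        rwa [hmx] at this
      · simp only [hΛ, mem_filter, mem_univ, true_and]
        exact le_trans ((hvzero i0).mpr hi0S) ht0

/-! ### Binomial counting for product measures -/

section Bin
variable {ι : Type*} [Fintype ι] {α : Type*} [MeasurableSpace α]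
  (ρ : Measure α) [IsProbabilityMeasure ρ] {E : Set α}

lemma mem_ST (T : Finset ι) (z : ι → α) :
    z ∈ Set.pi Set.univ (fun i => if i ∈ T then E else Eᶜ) ↔
      Finset.univ.filter (fun i => z i ∈ E) = T := by
  simp only [Set.mem_pi, Set.mem_univ, forall_true_left]
  constructor
  · intro h
    ext i
    simp only [mem_filter, mem_univ, true_and]
    constructor
    · intro hzi
      by_contra hiT
      have := h i
      rw [if_neg hiT] at this
      exact this hzi
    · intro hiT
      have := h i
      rwa [if_pos hiT] at this
  · intro h i
    split
    · next hiT => rw [← h] at hiT; exact (mem_filter.mp hiT).2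
    · next hiT =>
      rw [← h] at hiT
      intro hzi
      exact hiT (mem_filter.mpr ⟨mem_univ _, hzi⟩)

lemma pi_count_eq (hE : MeasurableSet E) (j : ℕ) :
    Measure.pi (fun _ : ι => ρ) {z | (Finset.univ.filter fun i => z i ∈ E).card = j}
      = ((Fintype.card ι).choose j : ℝ≥0∞) * ρ E ^ j * ρ Eᶜ ^ (Fintype.card ι - j) := by
  have hset : {z : ι → α | (Finset.univ.filter fun i => z i ∈ E).card = j}
      = ⋃ T ∈ Finset.powersetCard j (Finset.univ : Finset ι),
          Set.pi Set.univ (fun i => if i ∈ T then E else Eᶜ) := by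
    ext z
    simp only [Set.mem_setOf_eq, Set.mem_iUnion, Finset.mem_powersetCard]
    constructor
    · intro h
      exact ⟨Finset.univ.filter fun i => z i ∈ E, ⟨⟨filter_subset _ _, h⟩, (mem_ST _ _).mpr rfl⟩⟩
    · rintro ⟨T, ⟨-, hcard⟩, hz⟩
      rw [(mem_ST _ _).mp hz]; exact hcard
  rw [hset, measure_biUnion_finset]
  · have hterm : ∀ T ∈ Finset.powersetCard j (Finset.univ : Finset ι),
        Measure.pi (fun _ : ι => ρ) (Set.pi Set.univ (fun i => if i ∈ T then E else Eᶜ))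
          = ρ E ^ j * ρ Eᶜ ^ (Fintype.card ι - j) := by
      intro T hT
      obtain ⟨-, hTcard⟩ := Finset.mem_powersetCard.mp hT
      rw [Measure.pi_pi]
      have : ∀ i : ι, ρ (if i ∈ T then E else Eᶜ) = if i ∈ T then ρ E else ρ Eᶜ := by
        intro i; split <;> rfl
      rw [Finset.prod_congr rfl (fun i _ => this i), Finset.prod_ite, Finset.prod_const,
        Finset.prod_const]
      have h1 : (Finset.univ.filter fun i => i ∈ T) = T := by
        ext i; simp
      have h2 : (Finset.univ.filter fun i => ¬ i ∈ T).card = Fintype.card ι - j := by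
        rw [Finset.filter_not, Finset.card_sdiff_of_subset (by intro i hi; exact mem_univ i)]
        rw [h1, card_univ, hTcard]
      rw [h1, hTcard, h2]
    rw [Finset.sum_congr rfl hterm, Finset.sum_const, Finset.card_powersetCard, card_univ,
      nsmul_eq_mul, mul_assoc]
  · intro T hT T' hT' hne
    simp only [Function.onFun]
    rw [Set.disjoint_left]
    intro z hz hz'
    change z ∈ Set.pi _ _ at hz hz'
    exact hne (((mem_ST _ _).mp hz).symm.trans ((mem_ST _ _).mp hz'))
  · intro T hT
    exact MeasurableSet.univ_pi fun i => by split <;> [exact hE; exact hE.compl]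

lemma pi_count_le (hE : MeasurableSet E) (r : ℕ) :
    Measure.pi (fun _ : ι => ρ) {z | (Finset.univ.filter fun i => z i ∈ E).card ≤ r}
      = ENNReal.ofReal (binomCDF (Fintype.card ι) (ρ E).toReal r) := by
  have hset : {z : ι → α | (Finset.univ.filter fun i => z i ∈ E).card ≤ r}
      = ⋃ j ∈ Finset.range (r + 1),
          {z | (Finset.univ.filter fun i => z i ∈ E).card = j} := by
    ext z
    simp only [Set.mem_setOf_eq, Set.mem_iUnion, Finset.mem_range]
    constructor
    · intro h; exact ⟨_, Nat.lt_succ_of_le h, rfl⟩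
    · rintro ⟨j, hj, h⟩; omega
  have hmeas : ∀ j : ℕ, MeasurableSet
      {z : ι → α | (Finset.univ.filter fun i => z i ∈ E).card = j} := by
    intro j
    have : {z : ι → α | (Finset.univ.filter fun i => z i ∈ E).card = j}
        = ⋃ T ∈ Finset.powersetCard j (Finset.univ : Finset ι),
            Set.pi Set.univ (fun i => if i ∈ T then E else Eᶜ) := by
      ext z
      simp only [Set.mem_setOf_eq, Set.mem_iUnion, Finset.mem_powersetCard]
      constructor
      · intro h
        exact ⟨Finset.univ.filter fun i => z i ∈ E, ⟨⟨filter_subset _ _, h⟩, (mem_ST _ _).mpr rfl⟩⟩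
      · rintro ⟨T, ⟨-, hcard⟩, hz⟩
        rw [(mem_ST _ _).mp hz]; exact hcard
    rw [this]
    exact MeasurableSet.biUnion (Finset.countable_toSet _)
      (fun T _ => MeasurableSet.univ_pi fun i => by split <;> [exact hE; exact hE.compl])
  rw [hset, measure_biUnion_finset]
  rotate_left
  · intro j hj j' hj' hne
    simp only [Function.onFun]
    rw [Set.disjoint_left]
    intro z hz hz'
    rw [Set.mem_setOf_eq] at hz hz'
    exact hne (hz.symm.trans hz')
  · exact fun j _ => hmeas j
  have hp1 : ρ E ≤ 1 := prob_le_one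
  have hpt : ρ E = ENNReal.ofReal (ρ E).toReal := (ENNReal.ofReal_toReal (measure_ne_top ρ E)).symm
  have hc : ρ Eᶜ = ENNReal.ofReal (1 - (ρ E).toReal) := by
    rw [measure_compl hE (measure_ne_top ρ E), measure_univ]
    rw [ENNReal.ofReal_sub _ ENNReal.toReal_nonneg, ENNReal.ofReal_one, ← hpt]
  have h0p : 0 ≤ (ρ E).toReal := ENNReal.toReal_nonneg
  have h1p : (ρ E).toReal ≤ 1 := by
    rw [← ENNReal.toReal_one]
    exact ENNReal.toReal_mono ENNReal.one_ne_top hp1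
  rw [binomCDF, ENNReal.ofReal_sum_of_nonneg]
  · apply Finset.sum_congr rfl
    intro j hj
    rw [pi_count_eq ρ hE j, ENNReal.ofReal_mul (by positivity), ENNReal.ofReal_mul (by positivity),
      ENNReal.ofReal_natCast, ENNReal.ofReal_pow h0p,
      ENNReal.ofReal_pow (by linarith : (0:ℝ) ≤ 1 - (ρ E).toReal), ← hpt, ← hc]
  · intro j hj
    have : (0:ℝ) ≤ 1 - (ρ E).toReal := by linarith
    positivity

end Bin

/-! ### Auxiliary measure lemmas -/

noncomputable def lam0 : Measure ℝ := (volume : Measure ℝ).restrict (Set.Icc 0 1)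

instance : IsProbabilityMeasure lam0 := by
  constructor
  rw [lam0, Measure.restrict_apply_univ, Real.volume_Icc]
  norm_num

noncomputable def nuD (d : ℕ) : Measure (Fin d → ℝ) := Measure.pi fun _ => lam0

instance (d : ℕ) : IsProbabilityMeasure (nuD d) := by
  unfold nuD; infer_instance

lemma lam0_Icc {c : ℝ} (h0 : 0 ≤ c) (h1 : c ≤ 1) : lam0 (Set.Icc 0 c) = ENNReal.ofReal c := by
  rw [lam0, Measure.restrict_apply measurableSet_Icc,
    Set.inter_eq_left.mpr (Set.Icc_subset_Icc le_rfl h1), Real.volume_Icc, sub_zero]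

lemma map_eval_pi {δ : Type*} [Fintype δ] {β : Type*} [MeasurableSpace β]
    (m : Measure β) [IsProbabilityMeasure m] (j : δ) :
    Measure.map (fun x : δ → β => x j) (Measure.pi fun _ : δ => m) = m := by
  ext B hB
  rw [Measure.map_apply (measurable_pi_apply j) hB]
  have hpre : (fun x : δ → β => x j) ⁻¹' B
      = Set.pi Set.univ (Function.update (fun _ : δ => (Set.univ : Set β)) j B) := by
    ext x
    simp only [Set.mem_preimage, Set.mem_pi, Set.mem_univ, forall_true_left]
    constructor
    · intro h i
      rcases eq_or_ne i j with rfl | hij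
      · rwa [Function.update_self]
      · rw [Function.update_of_ne hij]; trivial
    · intro h
      have := h j
      rwa [Function.update_self] at this
  rw [hpre, Measure.pi_pi]
  rw [Finset.prod_eq_single j
    (fun i _ hij => by rw [Function.update_of_ne hij]; exact measure_univ)
    (fun h => absurd (Finset.mem_univ j) h)]
  rw [Function.update_self]

lemma nuD_Icc {d : ℕ} (x : Fin d → ℝ) (hx : ∀ j, 0 ≤ x j ∧ x j ≤ 1) :
    nuD d (Set.Icc 0 x) = ENNReal.ofReal (∏ j, x j) := by
  rw [← Set.pi_univ_Icc, nuD, Measure.pi_pi]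
  have hcomp : ∀ j : Fin d, lam0 (Set.Icc ((0 : Fin d → ℝ) j) (x j)) = ENNReal.ofReal (x j) :=
    fun j => lam0_Icc (hx j).1 (hx j).2
  rw [Finset.prod_congr rfl (fun j _ => hcomp j),
    ← ENNReal.ofReal_prod_of_nonneg (fun j _ => (hx j).1)]

lemma nuD_cube (d : ℕ) :
    ∀ᵐ x ∂(nuD d), ∀ j, 0 ≤ x j ∧ x j ≤ 1 := by
  have hmeasset : MeasurableSet (Set.pi Set.univ fun _ : Fin d => Set.Icc (0:ℝ) 1) :=
    MeasurableSet.univ_pi fun _ => measurableSet_Icc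
  have hmem : ∀ᵐ x ∂(nuD d), x ∈ Set.pi Set.univ fun _ : Fin d => Set.Icc (0:ℝ) 1 := by
    rw [ae_iff]
    have : {x : Fin d → ℝ | ¬ x ∈ Set.pi Set.univ fun _ : Fin d => Set.Icc (0:ℝ) 1}
        = (Set.pi Set.univ fun _ : Fin d => Set.Icc (0:ℝ) 1)ᶜ := rfl
    rw [this, measure_compl hmeasset (measure_ne_top _ _)]
    have hone : nuD d (Set.pi Set.univ fun _ : Fin d => Set.Icc (0:ℝ) 1) = 1 := by
      rw [nuD, Measure.pi_pi]
      have : lam0 (Set.Icc (0:ℝ) 1) = 1 := by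
        rw [lam0_Icc zero_le_one le_rfl, ENNReal.ofReal_one]
      simp [this]
    rw [hone, measure_univ, tsub_self]
  filter_upwards [hmem] with x hx j
  exact hx j (Set.mem_univ j)

lemma card_subtype_filter {s : ℕ} (i0 : Fin s) (P : Fin s → Prop)
    [DecidablePred P] [DecidablePred fun i : {i : Fin s // ¬ i = i0} => P ↑i]
    [DecidablePred fun i : Fin s => ¬ i = i0 ∧ P i] :
    (univ.filter fun i : {i : Fin s // ¬ i = i0} => P ↑i).card
      = (univ.filter fun i : Fin s => ¬ i = i0 ∧ P i).card := by
  apply Finset.card_bij (fun (i : {i : Fin s // ¬ i = i0}) _ => (i : Fin s))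
  · intro a ha
    exact mem_filter.mpr ⟨mem_univ _, a.2, (mem_filter.mp ha).2⟩
  · intro a _ b _ h
    exact Subtype.ext h
  · intro b hb
    obtain ⟨hbne, hPb⟩ := (mem_filter.mp hb).2
    exact ⟨⟨b, hbne⟩, mem_filter.mpr ⟨mem_univ _, hPb⟩, rfl⟩

lemma binomCDF_nonneg {n r : ℕ} {p : ℝ} (h0 : 0 ≤ p) (h1 : p ≤ 1) :
    0 ≤ binomCDF n p r := by
  refine Finset.sum_nonneg fun j _ => ?_
  have : (0:ℝ) ≤ 1 - p := by linarith
  positivity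

lemma binomCDF_le {n r : ℕ} {p : ℝ} (h0 : 0 ≤ p) (h1 : p ≤ 1) :
    binomCDF n p r ≤ ∑ j ∈ Finset.range (r + 1), (n.choose j : ℝ) := by
  refine Finset.sum_le_sum fun j _ => ?_
  have h1p : (0:ℝ) ≤ 1 - p := by linarith
  have hp : p ^ j ≤ 1 := pow_le_one₀ h0 h1
  have hq : (1 - p) ^ (n - j) ≤ 1 := pow_le_one₀ h1p (by linarith)
  calc (n.choose j : ℝ) * p ^ j * (1 - p) ^ (n - j)
      ≤ (n.choose j : ℝ) * 1 * 1 := by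
        apply mul_le_mul (mul_le_mul le_rfl hp (by positivity) (by positivity)) hq (by positivity)
        positivity
    _ = (n.choose j : ℝ) := by ring

/-- For i.i.d. uniform points on `[0,1]^d`, the conditional probability
given `X_1` that `X_1` is a `k`-PNN of the origin equals the `Binomial(s−1, ∏_j X_{1j})`
CDF at `2k − 2`, almost surely. -/
theorem kPNN_conditional_probability
    {Ω : Type*} [MeasurableSpace Ω]
    (μ : Measure Ω) [IsProbabilityMeasure μ]
    (d k s : ℕ) (hd : 1 ≤ d) (hk : 1 ≤ k) (hks : k ≤ s)
    (X : Fin s → Ω → (Fin d → ℝ)) (hmeas : ∀ i, Measurable (X i))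
    (hindep : iIndepFun X μ)
    (hunif : ∀ i, Measure.map (X i) μ =
      Measure.pi (fun _ : Fin d => (volume : Measure ℝ).restrict (Set.Icc 0 1)))
    (i0 : Fin s) (hi0 : (i0 : ℕ) = 0)
    (P1 : Ω → ℝ)
    (hP1 : P1 = fun ω => if isKPNN k 0 (fun i => X i ω) i0 then (1 : ℝ) else 0) :
    μ[P1 | MeasurableSpace.comap (X i0) inferInstance]
      =ᵐ[μ] fun ω => binomCDF (s - 1) (∏ j, X i0 ω j) (2 * k - 2) := by
  classical
  set r := 2 * k - 2 with hr
  have hνunif : ∀ i, Measure.map (X i) μ = nuD d := hunif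
  -- the joint random vector and its law
  set Y : Ω → (Fin s → Fin d → ℝ) := fun ω i => X i ω with hYdef
  have hYm : Measurable Y := measurable_pi_lambda _ hmeas
  have hlaw : Measure.map Y μ = Measure.pi (fun _ : Fin s => nuD d) := by
    refine (Measure.pi_eq fun E hE => ?_).symm
    rw [Measure.map_apply hYm (MeasurableSet.univ_pi hE)]
    have hpre : Y ⁻¹' Set.pi Set.univ E = ⋂ i, X i ⁻¹' E i := by
      ext ω; simp [hYdef, Set.mem_pi]
    rw [hpre, hindep.meas_iInter (fun i => ⟨E i, hE i, rfl⟩)]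
    exact Finset.prod_congr rfl fun i _ => by
      rw [← hνunif i, Measure.map_apply (hmeas i) (hE i)]
  -- genericity: coordinates in [0,1]
  have hcube : ∀ᵐ ω ∂μ, ∀ i j, 0 ≤ X i ω j ∧ X i ω j ≤ 1 := by
    rw [ae_all_iff]
    intro i
    have := nuD_cube d
    rw [← hνunif i] at this
    have hsetrepr : {x : Fin d → ℝ | ∀ j, 0 ≤ x j ∧ x j ≤ 1}
        = Set.pi Set.univ fun _ : Fin d => Set.Icc (0:ℝ) 1 := by
      ext x
      constructor
      · intro h j _; exact ⟨(h j).1, (h j).2⟩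
      · intro h j; exact h j (Set.mem_univ j)
    exact (ae_map_iff (hmeas i).aemeasurable (by
      rw [hsetrepr]
      exact MeasurableSet.univ_pi fun _ => measurableSet_Icc)).mp this
  -- genericity: distinct coordinates across distinct points
  have hdistae : ∀ᵐ ω ∂μ, ∀ i i' j j', i ≠ i' → X i ω j ≠ X i' ω j' := by
    rw [ae_all_iff]; intro i
    rw [ae_all_iff]; intro i'
    rw [ae_all_iff]; intro j
    rw [ae_all_iff]; intro j'
    by_cases hne : i = i'
    · subst hne
      exact ae_of_all _ fun ω h => absurd rfl h
    · have hf : Measurable fun ω => X i ω j := (measurable_pi_apply j).comp (hmeas i)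
      have hg : Measurable fun ω => X i' ω j' := (measurable_pi_apply j').comp (hmeas i')
      have hind : IndepFun (fun ω => X i ω j) (fun ω => X i' ω j') μ :=
        (hindep.indepFun hne).comp (measurable_pi_apply j) (measurable_pi_apply j')
      have hmapf : Measure.map (fun ω => X i ω j) μ = lam0 := by
        have hco : (fun ω => X i ω j) = (fun x : Fin d → ℝ => x j) ∘ (X i) := rfl
        rw [hco, ← Measure.map_map (measurable_pi_apply j) (hmeas i), hνunif i]
        exact map_eval_pi lam0 j
      have hmapg : Measure.map (fun ω => X i' ω j') μ = lam0 := by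
        have hco : (fun ω => X i' ω j') = (fun x : Fin d → ℝ => x j') ∘ (X i') := rfl
        rw [hco, ← Measure.map_map (measurable_pi_apply j') (hmeas i'), hνunif i']
        exact map_eval_pi lam0 j'
      have hjoint : Measure.map (fun ω => (X i ω j, X i' ω j')) μ = lam0.prod lam0 := by
        rw [(indepFun_iff_map_prod_eq_prod_map_map hf.aemeasurable hg.aemeasurable).mp hind,
          hmapf, hmapg]
      have hdiag : MeasurableSet {p : ℝ × ℝ | p.1 = p.2} :=
        measurableSet_eq_fun measurable_fst measurable_snd
      have h0 : μ {ω | X i ω j = X i' ω j'} = 0 := by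
        have hps : {ω | X i ω j = X i' ω j'}
            = (fun ω => (X i ω j, X i' ω j')) ⁻¹' {p : ℝ × ℝ | p.1 = p.2} := rfl
        rw [hps, ← Measure.map_apply (hf.prodMk hg) hdiag, hjoint,
          Measure.prod_apply hdiag]
        have hsl : ∀ x : ℝ, (Prod.mk x ⁻¹' {p : ℝ × ℝ | p.1 = p.2}) = {x} := by
          intro x; ext z; simp [eq_comm]
        have hsing : ∀ x : ℝ, lam0 {x} = 0 := by
          intro x
          refine le_antisymm ?_ zero_le
          calc lam0 {x} ≤ volume {x} := by
                rw [lam0, Measure.restrict_apply (measurableSet_singleton x)]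
                exact measure_mono Set.inter_subset_left
            _ = 0 := Real.volume_singleton
        simp only [hsl]
        simp [hsing]
      have : ∀ᵐ ω ∂μ, X i ω j ≠ X i' ω j' := by
        rw [ae_iff]
        have hs : {ω | ¬ X i ω j ≠ X i' ω j'} = {ω | X i ω j = X i' ω j'} := by
          ext ω; simp
        rw [hs]; exact h0
      filter_upwards [this] with ω hω _
      exact hω
  -- the split of the product space at coordinate i0
  set π₂ : Measure ({i : Fin s // ¬ i = i0} → Fin d → ℝ) :=
    Measure.pi fun _ => nuD d with hπ₂
  set F : (Fin s → Fin d → ℝ) → (Fin d → ℝ) × ({i : Fin s // ¬ i = i0} → Fin d → ℝ) :=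
    (Prod.map (fun w : {i : Fin s // i = i0} → Fin d → ℝ => w ⟨i0, rfl⟩) id)
      ∘ (MeasurableEquiv.piEquivPiSubtypeProd (fun _ : Fin s => Fin d → ℝ) (fun i => i = i0))
    with hFdef
  have hFapp : ∀ y, F y = (y i0, fun i : {i : Fin s // ¬ i = i0} => y ↑i) := fun y => rfl
  have hFpres : MeasurePreserving F (Measure.pi fun _ : Fin s => nuD d) ((nuD d).prod π₂) := by
    have h1 := measurePreserving_piEquivPiSubtypeProd (fun _ : Fin s => nuD d)
      (fun i : Fin s => i = i0)
    refine MeasurePreserving.comp ?_ h1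
    have heval : MeasurePreserving (fun w : {i : Fin s // i = i0} → Fin d → ℝ => w ⟨i0, rfl⟩)
        (@Measure.pi {i : Fin s // i = i0} (fun _ => Fin d → ℝ) (Subtype.fintype _)
          (fun _ => inferInstance) (fun _ => nuD d)) (nuD d) :=
      ⟨measurable_pi_apply _,
        @map_eval_pi {i : Fin s // i = i0} (Subtype.fintype _) (Fin d → ℝ) _ (nuD d) _ ⟨i0, rfl⟩⟩
    exact heval.prod (MeasurePreserving.id π₂)
  have hFm : Measurable F := hFpres.measurable
  -- measurability of the counting event
  have hDm : ∀ i : {i : Fin s // ¬ i = i0},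
      MeasurableSet {q : (Fin d → ℝ) × ({i : Fin s // ¬ i = i0} → Fin d → ℝ) |
        q.2 i ∈ Set.Icc 0 q.1} := by
    intro i
    have hset : {q : (Fin d → ℝ) × ({i : Fin s // ¬ i = i0} → Fin d → ℝ) |
        q.2 i ∈ Set.Icc 0 q.1}
        = ⋂ j, ({q : (Fin d → ℝ) × ({i : Fin s // ¬ i = i0} → Fin d → ℝ) | 0 ≤ q.2 i j}
            ∩ {q | q.2 i j ≤ q.1 j}) := by
      ext q
      simp only [Set.mem_setOf_eq, Set.mem_Icc, Pi.le_def, Set.mem_iInter, Set.mem_inter_iff]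
      constructor
      · rintro ⟨h1, h2⟩ j; exact ⟨h1 j, h2 j⟩
      · intro h; exact ⟨fun j => (h j).1, fun j => (h j).2⟩
    rw [hset]
    refine MeasurableSet.iInter fun j => ?_
    have hm1 : Measurable fun q : (Fin d → ℝ) × ({i : Fin s // ¬ i = i0} → Fin d → ℝ) =>
        q.2 i j := (measurable_pi_apply j).comp ((measurable_pi_apply i).comp measurable_snd)
    have hm2 : Measurable fun q : (Fin d → ℝ) × ({i : Fin s // ¬ i = i0} → Fin d → ℝ) =>
        q.1 j := (measurable_pi_apply j).comp measurable_fst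
    exact (measurableSet_le measurable_const hm1).inter (measurableSet_le hm1 hm2)
  set cF : (Fin d → ℝ) × ({i : Fin s // ¬ i = i0} → Fin d → ℝ) → ℕ :=
    fun q => (univ.filter fun i : {i : Fin s // ¬ i = i0} => q.2 i ∈ Set.Icc 0 q.1).card
    with hcFdef
  have hcm : Measurable cF := by
    have hrepr : cF = fun q => ∑ i : {i : Fin s // ¬ i = i0},
        if q.2 i ∈ Set.Icc 0 q.1 then 1 else 0 := by
      funext q
      show (univ.filter fun i : {i : Fin s // ¬ i = i0} => q.2 i ∈ Set.Icc 0 q.1).card = _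
      rw [Finset.card_filter]
    rw [hrepr]
    exact Finset.measurable_sum _ fun i _ =>
      Measurable.ite (hDm i) measurable_const measurable_const
  have hA''m : MeasurableSet {q : (Fin d → ℝ) × ({i : Fin s // ¬ i = i0} → Fin d → ℝ) |
      cF q ≤ r} := hcm measurableSet_Iic
  -- the full-space counting event
  set Atil : Set (Fin s → Fin d → ℝ) := F ⁻¹' {q | cF q ≤ r} with hAtil
  have hAtilm : MeasurableSet Atil := hFm hA''m
  have hAtilmem : ∀ y : Fin s → Fin d → ℝ, y ∈ Atil ↔
      (univ.filter fun i : Fin s => ¬ i = i0 ∧ y i ∈ Set.Icc 0 (y i0)).card ≤ r := by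
    intro y
    have hcF : cF (F y) = (univ.filter fun i : Fin s =>
        ¬ i = i0 ∧ y i ∈ Set.Icc 0 (y i0)).card := by
      rw [hFapp y, hcFdef]
      beta_reduce
      exact card_subtype_filter i0 (fun i => y i ∈ Set.Icc 0 (y i0))
    show cF (F y) ≤ r ↔ _
    rw [hcF]
  -- the measurable version of P1
  set Q : Ω → ℝ := (Y ⁻¹' Atil).indicator (fun _ => (1:ℝ)) with hQdef
  have hPQ : P1 =ᵐ[μ] Q := by
    filter_upwards [hcube, hdistae] with ω h1 h2
    rw [hP1, hQdef, Set.indicator_apply]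
    have hiff : isKPNN k 0 (fun i => X i ω) i0 ↔ ω ∈ Y ⁻¹' Atil := by
      rw [Set.mem_preimage, hAtilmem]
      exact kpnn_char k hd hk hks i0 (fun i => X i ω) (fun i j => h1 i j)
        (fun i i' j j' hne => h2 i i' j j' hne)
    exact if_congr hiff rfl rfl
  have hQint : Integrable Q μ := (integrable_const (1:ℝ)).indicator (hYm hAtilm)
  -- the conditional expectation candidate
  set G : (Fin d → ℝ) → ℝ := fun x => binomCDF (s - 1) (∏ j, x j) (2 * k - 2) with hGdef
  have hprodm : Measurable fun x : Fin d → ℝ => ∏ j, x j :=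
    Finset.measurable_prod _ fun j _ => measurable_pi_apply j
  have hbinc : Continuous fun p : ℝ => binomCDF (s - 1) p (2 * k - 2) := by
    unfold binomCDF
    exact continuous_finset_sum _ fun j _ =>
      (continuous_const.mul (continuous_pow j)).mul
        ((continuous_const.sub continuous_id).pow _)
  have hG : Measurable G := hbinc.measurable.comp hprodm
  have hm' : MeasurableSpace.comap (X i0) inferInstance
      ≤ (inferInstance : MeasurableSpace Ω) := (hmeas i0).comap_le
  have hgm : AEStronglyMeasurable[MeasurableSpace.comap (X i0) inferInstance]
      (fun ω => G (X i0 ω)) μ := by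
    have hXm' : @Measurable Ω (Fin d → ℝ) (MeasurableSpace.comap (X i0) inferInstance) _ (X i0) :=
      Measurable.of_comap_le le_rfl
    exact StronglyMeasurable.aestronglyMeasurable
      (Measurable.stronglyMeasurable (hG.comp hXm'))
  set C : ℝ := ∑ j ∈ Finset.range (2 * k - 2 + 1), ((s-1).choose j : ℝ) with hCdef
  have hGboundae : ∀ᵐ ω ∂μ, ‖G (X i0 ω)‖ ≤ C := by
    filter_upwards [hcube] with ω h1
    have h0p : 0 ≤ ∏ j, X i0 ω j := Finset.prod_nonneg fun j _ => (h1 i0 j).1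
    have h1p : ∏ j, X i0 ω j ≤ 1 :=
      Finset.prod_le_one (fun j _ => (h1 i0 j).1) (fun j _ => (h1 i0 j).2)
    rw [hGdef, Real.norm_eq_abs, abs_of_nonneg (binomCDF_nonneg h0p h1p)]
    exact binomCDF_le h0p h1p
  have hgint : Integrable (fun ω => G (X i0 ω)) μ :=
    Integrable.mono' (integrable_const C) (hG.comp (hmeas i0)).aestronglyMeasurable hGboundae
  -- key set-integral identity
  have hsetint : ∀ A : Set Ω, MeasurableSet[MeasurableSpace.comap (X i0) inferInstance] A →
      μ A < ⊤ →
      ∫ ω in A, G (X i0 ω) ∂μ = ∫ ω in A, Q ω ∂μ := by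
    rintro A ⟨B, hB, rfl⟩ -
    -- right-hand side
    have hRHS : ∫ ω in (X i0) ⁻¹' B, Q ω ∂μ
        = (μ ((X i0) ⁻¹' B ∩ Y ⁻¹' Atil)).toReal := by
      rw [hQdef, setIntegral_indicator (hYm hAtilm), setIntegral_const, smul_eq_mul, mul_one, measureReal_def]
    -- left-hand side
    have hLHS : ∫ ω in (X i0) ⁻¹' B, G (X i0 ω) ∂μ = ∫ x in B, G x ∂(nuD d) := by
      rw [← hνunif i0, setIntegral_map hB hG.aestronglyMeasurable (hmeas i0).aemeasurable]
    rw [hLHS, hRHS]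
    -- transfer to the product space
    have hpreeq : (X i0) ⁻¹' B ∩ Y ⁻¹' Atil = Y ⁻¹' ({y | y i0 ∈ B} ∩ Atil) := rfl
    have hBym : MeasurableSet {y : Fin s → Fin d → ℝ | y i0 ∈ B} := (measurable_pi_apply i0) hB
    have hSm : MeasurableSet ({y : Fin s → Fin d → ℝ | y i0 ∈ B} ∩ Atil) := hBym.inter hAtilm
    rw [hpreeq, ← Measure.map_apply hYm hSm, hlaw]
    -- identify with a set in the split space
    have hsplit : {y : Fin s → Fin d → ℝ | y i0 ∈ B} ∩ Atil
        = F ⁻¹' ((B ×ˢ Set.univ) ∩ {q | cF q ≤ r}) := by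
      ext y
      simp only [Set.mem_inter_iff, Set.mem_setOf_eq, Set.mem_preimage, Set.mem_prod,
        Set.mem_univ, and_true, hAtil, hFapp]
    have hsetm : MeasurableSet ((B ×ˢ (Set.univ : Set ({i : Fin s // ¬ i = i0} → Fin d → ℝ)))
        ∩ {q | cF q ≤ r}) := (hB.prod MeasurableSet.univ).inter hA''m
    rw [hsplit, hFpres.measure_preimage hsetm.nullMeasurableSet,
      Measure.prod_apply hsetm]
    -- slice computation
    have hslice : (fun x => π₂ (Prod.mk x ⁻¹'
          ((B ×ˢ (Set.univ : Set ({i : Fin s // ¬ i = i0} → Fin d → ℝ))) ∩ {q | cF q ≤ r})))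
        = B.indicator (fun x => π₂ {z : {i : Fin s // ¬ i = i0} → Fin d → ℝ |
            (univ.filter fun i => z i ∈ Set.Icc 0 x).card ≤ r}) := by
      funext x
      rw [Set.indicator_apply]
      by_cases hx : x ∈ B
      · rw [if_pos hx]
        congr 1
        ext z
        simp [hx, hcFdef]
      · rw [if_neg hx]
        have : Prod.mk x ⁻¹' ((B ×ˢ (Set.univ : Set ({i : Fin s // ¬ i = i0} → Fin d → ℝ)))
            ∩ {q | cF q ≤ r}) = ∅ := by
          ext z; simp [hx]
        rw [this, measure_empty]
    rw [hslice, lintegral_indicator hB]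
    -- identify the inner measure with the binomial CDF, a.e.
    have hcardι : Fintype.card {i : Fin s // ¬ i = i0} = s - 1 := by
      rw [Fintype.card_subtype_compl, Fintype.card_subtype_eq, Fintype.card_fin]
    have hinner : ∀ᵐ x ∂(nuD d), π₂ {z : {i : Fin s // ¬ i = i0} → Fin d → ℝ |
        (univ.filter fun i => z i ∈ Set.Icc 0 x).card ≤ r} = ENNReal.ofReal (G x) := by
      filter_upwards [nuD_cube d] with x hx
      have hIccm : MeasurableSet (Set.Icc (0 : Fin d → ℝ) x) := measurableSet_Icc
      have key := pi_count_le (ι := {i : Fin s // ¬ i = i0}) (nuD d) hIccm r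
      rw [hcardι, nuD_Icc x hx,
        ENNReal.toReal_ofReal (Finset.prod_nonneg fun j _ => (hx j).1)] at key
      rw [hπ₂, hGdef]
      convert key using 2
      ext z
      simp only [Set.mem_setOf_eq]
      congr!
    have hinteq : ∫⁻ x in B, π₂ {z : {i : Fin s // ¬ i = i0} → Fin d → ℝ |
        (univ.filter fun i => z i ∈ Set.Icc 0 x).card ≤ r} ∂(nuD d)
        = ∫⁻ x in B, ENNReal.ofReal (G x) ∂(nuD d) :=
      lintegral_congr_ae (ae_restrict_of_ae hinner)
    rw [hinteq]
    -- convert to a Bochner integral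
    have hGnn : 0 ≤ᵐ[(nuD d).restrict B] G := by
      refine ae_restrict_of_ae ?_
      filter_upwards [nuD_cube d] with x hx
      exact binomCDF_nonneg (Finset.prod_nonneg fun j _ => (hx j).1)
        (Finset.prod_le_one (fun j _ => (hx j).1) (fun j _ => (hx j).2))
    have hGint : Integrable G ((nuD d).restrict B) := by
      refine Integrable.mono' (integrable_const C) hG.aestronglyMeasurable ?_
      refine ae_restrict_of_ae ?_
      filter_upwards [nuD_cube d] with x hx
      have h0p : 0 ≤ ∏ j, x j := Finset.prod_nonneg fun j _ => (hx j).1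
      have h1p : ∏ j, x j ≤ 1 :=
        Finset.prod_le_one (fun j _ => (hx j).1) (fun j _ => (hx j).2)
      rw [hGdef, Real.norm_eq_abs, abs_of_nonneg (binomCDF_nonneg h0p h1p)]
      exact binomCDF_le h0p h1p
    rw [← ofReal_integral_eq_lintegral_ofReal hGint hGnn,
      ENNReal.toReal_ofReal (integral_nonneg_of_ae hGnn)]
  -- put everything together
  have hmain : (fun ω => G (X i0 ω)) =ᵐ[μ] μ[Q | MeasurableSpace.comap (X i0) inferInstance] :=
    ae_eq_condExp_of_forall_setIntegral_eq hm' hQint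
      (fun A _ _ => hgint.integrableOn) hsetint hgm
  calc μ[P1 | MeasurableSpace.comap (X i0) inferInstance]
      =ᵐ[μ] μ[Q | MeasurableSpace.comap (X i0) inferInstance] := condExp_congr_ae hPQ
    _ =ᵐ[μ] fun ω => G (X i0 ω) := hmain.symm
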